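/- arXiv:1712.03582 — 5 statements merged into one kernel-verified Lean document; each statement's English description precedes it below -/
import Mathlib

section
/- Let G be a torsion-free group and f : G → G an endomorphism whose image f(G) has finite index in G. If x is a non-trivial element of the kernel of f, then there exists an element y of G lying in the kernel of f² but not in the kernel of f. -/
/-- `Monoid.IsTorsionFree` as it was defined in Mathlib (Dec 2024); removed since. -/
def Monoid.IsTorsionFree (G : Type*) [Monoid G] : Prop :=
  ∀ g : G, g ≠ 1 → ¬IsOfFinOrder g

theorem stmt0 {G : Type*} [Group G] (htf : Monoid.IsTorsionFree G)
    (f : G →* G) (hfin : f.range.FiniteIndex)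
    (x : G) (hx : x ∈ f.ker) (hx1 : x ≠ 1) :
    ∃ y : G, y ∈ (f.comp f).ker ∧ y ∉ f.ker := by
  haveI := hfin
  obtain ⟨a, b, hab, h⟩ := Finite.exists_ne_map_eq_of_infinite
    (fun k : ℤ => (QuotientGroup.mk (x ^ k) : G ⧸ f.range))
  rw [QuotientGroup.eq] at h
  rw [← zpow_neg, ← zpow_add] at h
  obtain ⟨y, hy⟩ := h
  refine ⟨y, ?_, ?_⟩
  · simp only [MonoidHom.mem_ker, MonoidHom.comp_apply, hy, map_zpow,
      MonoidHom.mem_ker.mp hx, one_zpow]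
  · intro hk
    rw [MonoidHom.mem_ker] at hk
    rw [hk] at hy
    have hm : (-a + b) ≠ 0 := by omega
    exact htf x hx1 (isOfFinOrder_iff_zpow_eq_one.mpr ⟨-a + b, hm, hy.symm⟩)
end

section
/- Let G be a torsion-free group and f : G → G an endomorphism with non-trivial kernel whose image has finite index in G. Then the chain of kernels ker(f) ⊆ ker(f²) ⊆ ker(f³) ⊆ ⋯ is strictly increasing: for every m ≥ 1, ker(f^m) is a proper subgroup of ker(f^{m+1}). -/
theorem stmt1 {G : Type*} [Group G] (htf : Monoid.IsTorsionFree G)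
    (f : Monoid.End G) (hker : (f : G →* G).ker ≠ ⊥)
    (hfin : (f : G →* G).range.FiniteIndex) :
    ∀ m : ℕ, 1 ≤ m → ((f ^ m : Monoid.End G) : G →* G).ker < ((f ^ (m + 1) : Monoid.End G) : G →* G).ker := by
  -- ranges of all powers have finite index
  have hrange : ∀ m : ℕ, ((f ^ m : Monoid.End G) : G →* G).range.index ≠ 0 := by
    intro m
    induction m with
    | zero =>
      have : ((f ^ 0 : Monoid.End G) : G →* G).range = ⊤ := by
        rw [pow_zero]
        exact (Subgroup.eq_top_iff' _).mpr fun x => ⟨x, rfl⟩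
      rw [this, Subgroup.index_top]
      exact one_ne_zero
    | succ n ih =>
      have h2 : ((f ^ (n + 1) : Monoid.End G) : G →* G).range
          = (((f ^ n : Monoid.End G) : G →* G).range).map (f : G →* G) := by
        rw [pow_succ']
        exact MonoidHom.range_comp (f : G →* G) ((f ^ n : Monoid.End G) : G →* G)
      erw [h2, Subgroup.index_map]
      apply mul_ne_zero
      · intro h0
        exact ih (Nat.eq_zero_of_zero_dvd
          (h0 ▸ Subgroup.index_dvd_of_le le_sup_left))
      · exact hfin.index_ne_zero
  intro m _
  have hle : ((f ^ m : Monoid.End G) : G →* G).ker ≤ ((f ^ (m + 1) : Monoid.End G) : G →* G).ker := by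
    intro x hx
    have : (f ^ (m + 1) : Monoid.End G) x = f ((f ^ m : Monoid.End G) x) := by
      rw [pow_succ']; rfl
    erw [MonoidHom.mem_ker] at hx ⊢
    erw [this, hx, map_one]
  refine lt_of_le_of_ne hle (fun heq => ?_)
  -- pick a nontrivial element of ker f
  obtain ⟨x, hxker, hx1⟩ : ∃ x : G, x ∈ (f : G →* G).ker ∧ x ≠ 1 := by
    by_contra h
    push_neg at h
    exact hker (le_antisymm (fun y hy => by simpa using h y hy) bot_le)
  obtain ⟨k, hk0, _, hkH⟩ := Subgroup.exists_pow_mem_of_index_ne_zero (hrange m) x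
  obtain ⟨z, hz⟩ := hkH
  have hxk : x ^ k ∈ (f : G →* G).ker := Subgroup.pow_mem _ hxker k
  have hz1 : z ∈ ((f ^ (m + 1) : Monoid.End G) : G →* G).ker := by
    have : (f ^ (m + 1) : Monoid.End G) z = f ((f ^ m : Monoid.End G) z) := by
      rw [pow_succ']; rfl
    erw [MonoidHom.mem_ker] at hxk ⊢
    erw [this, hz, hxk]
  rw [← heq] at hz1
  have : x ^ k = 1 := by
    erw [MonoidHom.mem_ker] at hz1
    rw [← hz, hz1]
  exact htf x hx1 (isOfFinOrder_iff_pow_eq_one.mpr ⟨k, hk0, this⟩)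
end

section
/- Let Γ be a group whose center Z(Γ) is infinite cyclic with generator z, and let f : Γ → Γ be an endomorphism such that f(z) = z^d with |d| ≥ 2 and such that the induced endomorphism of Γ/Z(Γ) is an automorphism. Then z does not belong to the image f(Γ); in particular f(Γ) is a proper subgroup of Γ. -/
theorem stmt11 {Γ : Type*} [Group Γ] (z : Γ)
    (hz : Subgroup.center Γ = Subgroup.zpowers z) (hzinf : ¬ IsOfFinOrder z)
    (f : Γ →* Γ) (d : ℤ) (hd : 2 ≤ |d|) (hfz : f z = z ^ d)
    (fbar : Γ ⧸ Subgroup.center Γ →* Γ ⧸ Subgroup.center Γ)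
    (hcomm : ∀ x : Γ, fbar (QuotientGroup.mk x) = QuotientGroup.mk (f x))
    (hbij : Function.Bijective fbar) :
    z ∉ f.range ∧ f.range ≠ ⊤ := by
  have hmain : z ∉ f.range := by
    rintro ⟨g, hg⟩
    have hzc : z ∈ Subgroup.center Γ := by
      rw [hz]; exact Subgroup.mem_zpowers z
    have h1 : fbar (QuotientGroup.mk g) = 1 := by
      rw [hcomm, hg, QuotientGroup.eq_one_iff]
      exact hzc
    have h2 : (QuotientGroup.mk g : Γ ⧸ Subgroup.center Γ) = 1 := by
      apply hbij.1
      rw [h1, map_one]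
    have hgc : g ∈ Subgroup.center Γ := (QuotientGroup.eq_one_iff g).mp h2
    rw [hz] at hgc
    obtain ⟨k, hk⟩ := hgc
    have : z ^ (d * k) = z ^ (1 : ℤ) := by
      simp only at hk
      calc z ^ (d * k) = (z ^ d) ^ k := by rw [zpow_mul]
        _ = (f z) ^ k := by rw [hfz]
        _ = f (z ^ k) := by rw [map_zpow]
        _ = z ^ (1 : ℤ) := by rw [hk, hg, zpow_one]
    have hdk : d * k = 1 := injective_zpow_iff_not_isOfFinOrder.mpr hzinf this
    have : |d| ≤ 1 := by
      rcases Int.eq_one_or_neg_one_of_mul_eq_one' hdk with ⟨h, _⟩ | ⟨h, _⟩ <;> simp [h]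
    omega
  exact ⟨hmain, fun h => hmain (h ▸ Subgroup.mem_top z)⟩
end

section
/- Let Γ be a group with infinite cyclic center generated by z, and let f : Γ → Γ be an endomorphism with f(z) = z^{d} for |d| ≥ 2 that induces an automorphism on Γ/Z(Γ). Then the images of the iterates form a strictly decreasing chain: f^{m+1}(Γ) is a proper subgroup of f^m(Γ) for all m ≥ 0. -/
theorem stmt12 {Γ : Type*} [Group Γ] (z : Γ)
    (hz : Subgroup.center Γ = Subgroup.zpowers z) (hzinf : ¬ IsOfFinOrder z)
    (f : Monoid.End Γ) (d : ℤ) (hd : 2 ≤ |d|) (hfz : f z = z ^ d)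
    (fbar : Γ ⧸ Subgroup.center Γ →* Γ ⧸ Subgroup.center Γ)
    (hcomm : ∀ x : Γ, fbar (QuotientGroup.mk x) = QuotientGroup.mk (f x))
    (hbij : Function.Bijective fbar) :
    ∀ m : ℕ, ((f ^ (m + 1) : Monoid.End Γ) : Γ →* Γ).range < ((f ^ m : Monoid.End Γ) : Γ →* Γ).range := by
  have hzinj : Function.Injective (fun n : ℤ => z ^ n) :=
    (injective_zpow_iff_not_isOfFinOrder).2 hzinf
  -- iterate formula
  have hiter : ∀ n : ℕ, (f ^ n : Monoid.End Γ) z = z ^ ((d : ℤ) ^ n) := by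
    intro n
    induction n with
    | zero => simp
    | succ n ih =>
      have : (f ^ (n + 1) : Monoid.End Γ) z = (f ^ n : Monoid.End Γ) (f z) := by
        rw [pow_succ]; rfl
      rw [this, hfz, map_zpow, ih, ← zpow_mul, pow_succ, mul_comm]
  -- injectivity on quotient for iterates
  have hinj : ∀ (n : ℕ) (x : Γ),
      (QuotientGroup.mk ((f ^ n : Monoid.End Γ) x) : Γ ⧸ Subgroup.center Γ) = 1 →
      (QuotientGroup.mk x : Γ ⧸ Subgroup.center Γ) = 1 := by
    intro n
    induction n with
    | zero => intro x h; simpa using h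
    | succ n ih =>
      intro x h
      have h1 : (QuotientGroup.mk ((f ^ n : Monoid.End Γ) (f x)) : Γ ⧸ Subgroup.center Γ) = 1 := by
        have : (f ^ (n + 1) : Monoid.End Γ) x = (f ^ n : Monoid.End Γ) (f x) := by
          rw [pow_succ]; rfl
        rwa [this] at h
      have h2 := ih (f x) h1
      have : fbar (QuotientGroup.mk x) = fbar 1 := by
        rw [hcomm x, h2, map_one]
      exact hbij.1 this
  intro m
  rw [lt_iff_le_and_ne]
  constructor
  · rintro y ⟨x, rfl⟩
    exact ⟨f x, by rw [pow_succ]; rfl⟩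
  · intro heq
    have hmem : z ^ ((d : ℤ) ^ m) ∈ ((f ^ (m + 1) : Monoid.End Γ) : Γ →* Γ).range := by
      rw [heq]; exact ⟨z, hiter m⟩
    obtain ⟨x, hx⟩ := hmem
    -- z ^ d^m is central
    have hc : (QuotientGroup.mk ((f ^ (m + 1) : Monoid.End Γ) x) : Γ ⧸ Subgroup.center Γ) = 1 := by
      rw [show ((f ^ (m + 1) : Monoid.End Γ) x) = z ^ ((d : ℤ) ^ m) from hx, QuotientGroup.eq_one_iff, hz]
      exact ⟨(d : ℤ) ^ m, rfl⟩
    have hx1 := hinj (m + 1) x hc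
    rw [QuotientGroup.eq_one_iff, hz, Subgroup.mem_zpowers_iff] at hx1
    obtain ⟨k, rfl⟩ := hx1
    have : z ^ ((d : ℤ) ^ (m + 1) * k) = z ^ ((d : ℤ) ^ m) := by
      rw [← (show ((f ^ (m + 1) : Monoid.End Γ) (z ^ k)) = z ^ ((d : ℤ) ^ m) from hx), map_zpow, hiter (m + 1), ← zpow_mul]
    have heqk : (d : ℤ) ^ (m + 1) * k = (d : ℤ) ^ m := hzinj this
    have hdne : d ≠ 0 := by rintro rfl; simp at hd
    have hd0 : (d : ℤ) ^ m ≠ 0 := pow_ne_zero m hdne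
    have hdk : d * k = 1 := by
      have h2 : (d : ℤ) ^ m * (d * k) = (d : ℤ) ^ m * 1 := by
        linear_combination heqk
      exact mul_left_cancel₀ hd0 h2
    rcases Int.isUnit_iff.1 (IsUnit.of_mul_eq_one (a := d) k hdk) with h | h <;> simp [h] at hd
end

section
/- Let 1 → C → Γ → Q → 1 be a central extension of groups where C is infinite cyclic, equal to the full center of Γ, and Q is a Hopfian group with trivial center. Then Γ is Hopfian: every surjective endomorphism of Γ is an isomorphism. -/
theorem stmt15 {Γ : Type*} [Group Γ]
    [IsCyclic ↥(Subgroup.center Γ)] [Infinite ↥(Subgroup.center Γ)]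
    (hQcenter : Subgroup.center (Γ ⧸ Subgroup.center Γ) = ⊥)
    (hQhopf : ∀ g : (Γ ⧸ Subgroup.center Γ) →* (Γ ⧸ Subgroup.center Γ),
      Function.Surjective g → Function.Injective g) :
    ∀ φ : Γ →* Γ, Function.Surjective φ → Function.Injective φ := by
  intro φ hφ
  set Z := Subgroup.center Γ with hZ
  -- φ maps the center into the center
  have hmap : Z ≤ Z.comap φ := by
    intro z hz
    rw [Subgroup.mem_comap]
    rw [Subgroup.mem_center_iff]
    intro y
    obtain ⟨x, rfl⟩ := hφ y
    rw [← map_mul, ← map_mul, (Subgroup.mem_center_iff.mp hz x)]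
  -- induced map on the quotient
  let φbar : Γ ⧸ Z →* Γ ⧸ Z := QuotientGroup.map Z Z φ hmap
  have hbar_surj : Function.Surjective φbar := by
    intro q
    obtain ⟨x, rfl⟩ := QuotientGroup.mk_surjective q
    obtain ⟨y, rfl⟩ := hφ x
    exact ⟨QuotientGroup.mk y, rfl⟩
  have hbar_inj : Function.Injective φbar := hQhopf φbar hbar_surj
  -- if φ g ∈ Z then g ∈ Z
  have hpre : ∀ g : Γ, φ g ∈ Z → g ∈ Z := by
    intro g hg
    have h1 : φbar (QuotientGroup.mk g) = 1 := by
      show QuotientGroup.mk (φ g) = 1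
      rwa [QuotientGroup.eq_one_iff]
    have h2 : (QuotientGroup.mk g : Γ ⧸ Z) = 1 := hbar_inj (by rw [h1, map_one])
    rwa [QuotientGroup.eq_one_iff] at h2
  -- restriction of φ to the center
  let ψ : Z →* Z := φ.domRestrict Z |>.codRestrict Z (fun z => hmap z.2)
  have hψ_surj : Function.Surjective ψ := by
    rintro ⟨z, hz⟩
    obtain ⟨g, hg⟩ := hφ z
    have hgZ : g ∈ Z := hpre g (hg ▸ hz)
    exact ⟨⟨g, hgZ⟩, Subtype.ext hg⟩
  -- ψ is injective since Z is infinite cyclic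
  have hψ_inj : Function.Injective ψ := by
    obtain ⟨ξ, hξ⟩ := IsCyclic.exists_generator (α := Z)
    have hord : ¬ IsOfFinOrder ξ := by
      have := Infinite.orderOf_eq_zero_of_forall_mem_zpowers hξ
      rwa [orderOf_eq_zero_iff] at this
    have hinj : Function.Injective (fun n : ℤ => ξ ^ n) :=
      injective_zpow_iff_not_isOfFinOrder.mpr hord
    obtain ⟨m, hm⟩ := Subgroup.mem_zpowers_iff.mp (hξ (ψ ξ))
    obtain ⟨k, hk⟩ := hψ_surj ξ
    obtain ⟨n, hn⟩ := Subgroup.mem_zpowers_iff.mp (hξ k)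
    have hξeq : ξ ^ (m * n) = ξ ^ (1 : ℤ) := by
      rw [zpow_one, zpow_mul, hm, ← map_zpow, hn, hk]
    have hmn : m * n = 1 := hinj hξeq
    have hm0 : m ≠ 0 := by rintro rfl; simp at hmn
    intro x y hxy
    have hone : ψ (x * y⁻¹) = 1 := by
      rw [map_mul, map_inv, hxy, mul_inv_cancel]
    obtain ⟨j, hj⟩ := Subgroup.mem_zpowers_iff.mp (hξ (x * y⁻¹))
    have h3 : ξ ^ (m * j) = ξ ^ (0 : ℤ) := by
      rw [zpow_zero, zpow_mul, hm, ← map_zpow, hj, hone]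
    have hj0 : m * j = 0 := hinj h3
    have : j = 0 := by
      rcases mul_eq_zero.mp hj0 with h | h
      · exact absurd h hm0
      · exact h
    have : x * y⁻¹ = 1 := by rw [← hj, this, zpow_zero]
    exact mul_inv_eq_one.mp this
  intro a b hab
  have h1 : φ (a * b⁻¹) = 1 := by
    rw [map_mul, map_inv, hab, mul_inv_cancel]
  have haZ : a * b⁻¹ ∈ Z := hpre _ (h1 ▸ Z.one_mem)
  have h2 : ψ ⟨a * b⁻¹, haZ⟩ = 1 := Subtype.ext h1
  have h3 := hψ_inj (h2.trans (map_one ψ).symm)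
  have h4 : a * b⁻¹ = 1 := congrArg Subtype.val h3
  exact mul_inv_eq_one.mp h4
end
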